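/- The Riesz logarithmic kernel G_n(u) = (1/l_n) Σ_{i=0}^n D_i(u)/(i+1), where D_i is the Dirichlet kernel and l_n = Σ_{i=0}^n 1/(i+1), satisfies sup_n ∫_T |G_n(u)| du < ∞, i.e., the L¹ norms of the kernels G_n are uniformly bounded. -/

import Mathlib

noncomputable section
open MeasureTheory Real Filter Set

/-- l_n = Σ_{k=0}^n 1/(k+1). -/
def logSum (n : ℕ) : ℝ := ∑ k ∈ Finset.range (n + 1), (1 : ℝ) / (k + 1)

/-- Dirichlet kernel D_k(u) = sin((k+1/2)u)/sin(u/2). -/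
def dirichlet (k : ℕ) (u : ℝ) : ℝ := Real.sin (((k : ℝ) + 1 / 2) * u) / Real.sin (u / 2)

/-- Riesz logarithmic kernel G_n(u) = (1/l_n) Σ_{i=0}^n D_i(u)/(i+1). -/
def rieszKer (n : ℕ) (u : ℝ) : ℝ :=
  (1 / logSum n) * ∑ i ∈ Finset.range (n + 1), dirichlet i u / ((i : ℝ) + 1)

lemma logSum_pos (n : ℕ) : 0 < logSum n := by
  apply Finset.sum_pos
  · intro i _; positivity
  · exact ⟨0, Finset.mem_range.mpr (Nat.succ_pos n)⟩

lemma sin_sq_half' (x : ℝ) : Real.sin (x / 2) ^ 2 = (1 - Real.cos x) / 2 := by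
  have h := Real.cos_sq (x / 2)
  have h2 := Real.sin_sq_add_cos_sq (x / 2)
  have hx : (2 : ℝ) * (x / 2) = x := by ring
  rw [hx] at h
  linarith

/-- Dirichlet kernel as a trigonometric polynomial (off the zeros of sin(u/2)). -/
lemma dirichlet_eq (u : ℝ) (h : Real.sin (u / 2) ≠ 0) (k : ℕ) :
    dirichlet k u = 1 + 2 * ∑ j ∈ Finset.range k, Real.cos (((j : ℝ) + 1) * u) := by
  induction k with
  | zero =>
      simp only [dirichlet, Finset.range_zero, Finset.sum_empty, mul_zero, add_zero,
        Nat.cast_zero]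
      rw [show ((0 : ℝ) + 1 / 2) * u = u / 2 by ring]
      exact div_self h
  | succ k ih =>
      have key : Real.sin (((k : ℝ) + 1 + 1 / 2) * u) - Real.sin (((k : ℝ) + 1 / 2) * u)
          = 2 * Real.sin (u / 2) * Real.cos (((k : ℝ) + 1) * u) := by
        have := Real.sin_sub_sin (((k : ℝ) + 1 + 1 / 2) * u) (((k : ℝ) + 1 / 2) * u)
        rw [show ((((k : ℝ) + 1 + 1 / 2) * u - ((k : ℝ) + 1 / 2) * u) / 2) = u / 2 by ring,
          show ((((k : ℝ) + 1 + 1 / 2) * u + ((k : ℝ) + 1 / 2) * u) / 2) = ((k : ℝ) + 1) * u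
            by ring] at this
        linarith
      have hs : Real.sin (((k : ℝ) + 1 + 1 / 2) * u)
          = Real.sin (((k : ℝ) + 1 / 2) * u)
            + 2 * Real.sin (u / 2) * Real.cos (((k : ℝ) + 1) * u) := by linarith [key]
      have : dirichlet (k + 1) u = dirichlet k u + 2 * Real.cos (((k : ℝ) + 1) * u) := by
        unfold dirichlet
        push_cast
        rw [hs, add_div]
        congr 1
        rw [mul_comm (2 : ℝ) (Real.sin (u / 2)), mul_assoc]
        exact mul_div_cancel_left₀ _ h
      rw [this, ih, Finset.sum_range_succ]
      ring

/-- Fejér-type positivity: partial sums of Dirichlet kernels are nonnegative. -/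
lemma fejer_nonneg (n : ℕ) (u : ℝ) : 0 ≤ ∑ i ∈ Finset.range n, dirichlet i u := by
  by_cases h : Real.sin (u / 2) = 0
  · simp [dirichlet, h]
  · have key : ∀ m : ℕ, (∑ i ∈ Finset.range m, Real.sin (((i : ℝ) + 1 / 2) * u))
        * Real.sin (u / 2) = Real.sin ((m : ℝ) * u / 2) ^ 2 := by
      intro m
      induction m with
      | zero => simp
      | succ m ih =>
          rw [Finset.sum_range_succ, add_mul, ih]
          have h1 : Real.cos ((m : ℝ) * u) - Real.cos (((m : ℝ) + 1) * u)
              = 2 * Real.sin (((m : ℝ) + 1 / 2) * u) * Real.sin (u / 2) := by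
            have := Real.cos_sub_cos ((m : ℝ) * u) (((m : ℝ) + 1) * u)
            rw [show (((m : ℝ) * u + ((m : ℝ) + 1) * u) / 2) = ((m : ℝ) + 1 / 2) * u by ring,
              show (((m : ℝ) * u - ((m : ℝ) + 1) * u) / 2) = -(u / 2) by ring,
              Real.sin_neg] at this
            linarith
          have h2 := sin_sq_half' ((m : ℝ) * u)
          have h3 := sin_sq_half' (((m : ℝ) + 1) * u)
          push_cast
          linarith
    have hsum : ∑ i ∈ Finset.range n, dirichlet i u
        = (Real.sin ((n : ℝ) * u / 2) / Real.sin (u / 2)) ^ 2 := by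
      unfold dirichlet
      rw [← Finset.sum_div]
      rw [div_pow]
      rw [← key n]
      field_simp
      ring_nf
      exact Finset.sum_congr rfl fun i _ => by congr 1; ring
    rw [hsum]
    positivity

/-- Abel-summation comparison: the weighted sum dominates the Fejér average. -/
lemma abel_ineq (u : ℝ) : ∀ m : ℕ,
    (1 / ((m : ℝ) + 1)) * (∑ i ∈ Finset.range m, dirichlet i u)
      ≤ ∑ i ∈ Finset.range m, dirichlet i u / ((i : ℝ) + 1) := by
  intro m
  induction m with
  | zero => simp
  | succ m ih =>
      rw [Finset.sum_range_succ, Finset.sum_range_succ]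
      have h1 : (1 / ((m : ℝ) + 1 + 1)) * (∑ i ∈ Finset.range m, dirichlet i u + dirichlet m u)
          ≤ (1 / ((m : ℝ) + 1)) * (∑ i ∈ Finset.range m, dirichlet i u + dirichlet m u) := by
        apply mul_le_mul_of_nonneg_right
        · apply one_div_le_one_div_of_le
          · positivity
          · linarith
        · have := fejer_nonneg (m + 1) u
          rw [Finset.sum_range_succ] at this
          exact this
      push_cast at *
      calc (1 / ((m : ℝ) + 1 + 1)) * (∑ i ∈ Finset.range m, dirichlet i u + dirichlet m u)
          ≤ (1 / ((m : ℝ) + 1)) * (∑ i ∈ Finset.range m, dirichlet i u + dirichlet m u) := h1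
        _ = (1 / ((m : ℝ) + 1)) * (∑ i ∈ Finset.range m, dirichlet i u)
            + dirichlet m u / ((m : ℝ) + 1) := by ring
        _ ≤ _ := by linarith

lemma rieszKer_nonneg (n : ℕ) (u : ℝ) : 0 ≤ rieszKer n u := by
  unfold rieszKer
  apply mul_nonneg
  · exact le_of_lt (div_pos one_pos (logSum_pos n))
  · have h1 := abel_ineq u (n + 1)
    have h2 := fejer_nonneg (n + 1) u
    have h3 : (0 : ℝ) ≤ 1 / ((n : ℝ) + 1 + 1) := by positivity
    push_cast at h1
    nlinarith

/-- The trigonometric-polynomial version of the Riesz kernel. -/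
def rieszPoly (n : ℕ) (u : ℝ) : ℝ :=
  (1 / logSum n) * ∑ i ∈ Finset.range (n + 1),
    (1 + 2 * ∑ j ∈ Finset.range i, Real.cos (((j : ℝ) + 1) * u)) / ((i : ℝ) + 1)

lemma rieszKer_eq_poly (n : ℕ) {u : ℝ} (h : Real.sin (u / 2) ≠ 0) :
    rieszKer n u = rieszPoly n u := by
  unfold rieszKer rieszPoly
  congr 1
  refine Finset.sum_congr rfl fun i _ => ?_
  rw [dirichlet_eq u h i]

lemma sin_half_zero_countable : {u : ℝ | Real.sin (u / 2) = 0}.Countable := by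
  have hsub : {u : ℝ | Real.sin (u / 2) = 0}
      ⊆ Set.range (fun k : ℤ => (k : ℝ) * (2 * Real.pi)) := by
    intro u hu
    obtain ⟨k, hk⟩ := Real.sin_eq_zero_iff.mp hu
    refine ⟨k, ?_⟩
    show (k : ℝ) * (2 * Real.pi) = u
    linarith [hk]
  exact (Set.countable_range _).mono hsub

lemma cos_mul_continuous (j : ℕ) :
    Continuous fun u : ℝ => Real.cos (((j : ℝ) + 1) * u) := by fun_prop

lemma term_continuous (i : ℕ) : Continuous fun u : ℝ =>
    (1 + 2 * ∑ j ∈ Finset.range i, Real.cos (((j : ℝ) + 1) * u)) / ((i : ℝ) + 1) := by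
  apply Continuous.div_const
  exact continuous_const.add (continuous_const.mul
    (continuous_finset_sum _ fun j _ => cos_mul_continuous j))

lemma integral_cos_mul_zero (j : ℕ) :
    (∫ u in (-Real.pi)..Real.pi, Real.cos (((j : ℝ) + 1) * u)) = 0 := by
  have hj : ((j : ℝ) + 1) ≠ 0 := by positivity
  rw [intervalIntegral.integral_comp_mul_left (fun x => Real.cos x) hj, integral_cos]
  have h0 : Real.sin (((j : ℝ) + 1) * Real.pi) = 0 := by
    have := Real.sin_nat_mul_pi (j + 1)
    push_cast at this
    exact this
  have h0' : Real.sin (((j : ℝ) + 1) * (-Real.pi)) = 0 := by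
    rw [show ((j : ℝ) + 1) * (-Real.pi) = -(((j : ℝ) + 1) * Real.pi) by ring,
      Real.sin_neg, h0, neg_zero]
  rw [h0, h0']
  simp

lemma integral_term (i : ℕ) :
    (∫ u in (-Real.pi)..Real.pi,
      (1 + 2 * ∑ j ∈ Finset.range i, Real.cos (((j : ℝ) + 1) * u)) / ((i : ℝ) + 1))
    = 2 * Real.pi / ((i : ℝ) + 1) := by
  rw [intervalIntegral.integral_div]
  congr 1
  have hint : IntervalIntegrable
      (fun u => 2 * ∑ j ∈ Finset.range i, Real.cos (((j : ℝ) + 1) * u))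
      volume (-Real.pi) Real.pi := by
    apply Continuous.intervalIntegrable
    exact continuous_const.mul (continuous_finset_sum _ fun j _ => cos_mul_continuous j)
  rw [intervalIntegral.integral_add intervalIntegrable_const hint,
    intervalIntegral.integral_const_mul,
    intervalIntegral.integral_finset_sum
      (fun j _ => (cos_mul_continuous j).intervalIntegrable _ _)]
  simp only [integral_cos_mul_zero, Finset.sum_const_zero, mul_zero, add_zero,
    intervalIntegral.integral_const, smul_eq_mul, mul_one]
  ring

theorem riesz_kernel_uniform_L1_bound :
    ∃ C : ℝ, ∀ n : ℕ,
      (∫ u in Set.Icc (-Real.pi) Real.pi, |rieszKer n u|) ≤ C := by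
  refine ⟨2 * Real.pi, fun n => ?_⟩
  have hl := logSum_pos n
  have habs : ∀ u, |rieszKer n u| = rieszKer n u := fun u =>
    abs_of_nonneg (rieszKer_nonneg n u)
  simp_rw [habs]
  have hZ : (volume {u : ℝ | Real.sin (u / 2) = 0}) = 0 :=
    sin_half_zero_countable.measure_zero _
  have hae : rieszKer n =ᵐ[volume] rieszPoly n := by
    rw [Filter.eventuallyEq_iff_exists_mem]
    refine ⟨{u : ℝ | Real.sin (u / 2) ≠ 0}, ?_, fun u hu => rieszKer_eq_poly n hu⟩
    rw [MeasureTheory.mem_ae_iff]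
    simpa [Set.compl_setOf] using hZ
  rw [MeasureTheory.integral_congr_ae (MeasureTheory.ae_restrict_of_ae hae)]
  rw [MeasureTheory.integral_Icc_eq_integral_Ioc,
    ← intervalIntegral.integral_of_le (by linarith [Real.pi_pos] : -Real.pi ≤ Real.pi)]
  unfold rieszPoly
  rw [intervalIntegral.integral_const_mul,
    intervalIntegral.integral_finset_sum
      (fun i _ => (term_continuous i).intervalIntegrable _ _)]
  have hsum : ∑ i ∈ Finset.range (n + 1),
      (∫ u in (-Real.pi)..Real.pi,
        (1 + 2 * ∑ j ∈ Finset.range i, Real.cos (((j : ℝ) + 1) * u)) / ((i : ℝ) + 1))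
      = 2 * Real.pi * logSum n := by
    rw [Finset.sum_congr rfl fun i _ => integral_term i]
    unfold logSum
    rw [Finset.mul_sum]
    exact Finset.sum_congr rfl fun i _ => by rw [mul_one_div]
  rw [hsum]
  rw [show (1 / logSum n) * (2 * Real.pi * logSum n) = 2 * Real.pi * (logSum n / logSum n)
    by ring, div_self (ne_of_gt hl), mul_one]
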